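/- Let U be a real random variable with distribution F satisfying E[U] = 0 and E[U²] = 1, let τ > 0, and let λ ↦ p(x; λ) be a probability density in x that is twice continuously differentiable in λ with derivatives dominated (uniformly for λ near λ₀ and u in the support of F) by an F-integrable function, so that differentiation under the integral sign is justified. Define q(x; ξ) = ∫ p(x; λ₀ + τ ξ u) dF(u) and suppose p(x; λ₀) > 0. Then the first-order score for ξ vanishes identically: ∂/∂ξ log q(x; ξ) |_{ξ=0} = τ ∫ u dF(u) · p′(x; λ₀)/p(x; λ₀) = 0 for all such x, while the second-order score equals ∂²/∂ξ² log q(x; ξ) |_{ξ=0} = τ² p″(x; λ₀)/p(x; λ₀), where p′ and p″ denote the first and second partial derivatives of p with respect to λ. -/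

import Mathlib

open MeasureTheory Filter Topology
open scoped BigOperators ENNReal

/-- For the mixture density `q(x; ξ) = ∫ p(x; l₀ + τξu) dF(u)` with
`E[U] = 0`, `E[U²] = 1`, the first-order score in `ξ` vanishes identically at `ξ = 0`,
while the second-order score equals `τ² p″(x; l₀)/p(x; l₀)`. -/
theorem heterogeneity_score_degenerate
    {𝒳 : Type*} [MeasurableSpace 𝒳] (μ : Measure 𝒳)
    (F : Measure ℝ) [IsProbabilityMeasure F]
    (hU1 : ∫ u, u ∂F = 0) (hU2 : ∫ u, u ^ 2 ∂F = 1)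
    (τ : ℝ) (hτ : 0 < τ) (l₀ : ℝ)
    (p : 𝒳 → ℝ → ℝ)
    (hpnonneg : ∀ x l, 0 ≤ p x l)
    (hpdens : ∀ l, ∫ x, p x l ∂μ = 1)
    (x : 𝒳)
    (hsmooth : ContDiff ℝ 2 fun l => p x l)
    -- domination justifying differentiation under the integral sign
    (D : ℝ → ℝ) (hD : Integrable D F) (ε : ℝ) (hε : 0 < ε)
    (hdom : ∀ᵐ u ∂F, ∀ ξ : ℝ, |ξ| < ε → ∀ k ≤ 2,
      |u ^ k * iteratedDeriv k (fun l => p x l) (l₀ + τ * ξ * u)| ≤ D u)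
    (hpos : 0 < p x l₀) :
    HasDerivAt (fun ξ : ℝ => Real.log (∫ u, p x (l₀ + τ * ξ * u) ∂F)) 0 0 ∧
    deriv (deriv fun ξ : ℝ => Real.log (∫ u, p x (l₀ + τ * ξ * u) ∂F)) 0
      = τ ^ 2 * iteratedDeriv 2 (fun l => p x l) l₀ / p x l₀ := by
  set f : ℝ → ℝ := fun l => p x l with hf_def
  -- smoothness facts
  have hsd := contDiff_succ_iff_deriv.mp
    (show ContDiff ℝ ((1:WithTop ℕ∞) + 1) f by norm_num; exact hsmooth)
  have hdf : Differentiable ℝ f := hsd.1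
  have hdf' : Differentiable ℝ (deriv f) := hsd.2.2.differentiable one_ne_zero
  have hcf : Continuous f := hdf.continuous
  have hcf' : Continuous (deriv f) := hdf'.continuous
  have hcf'' : Continuous (deriv (deriv f)) := hsd.2.2.continuous_deriv le_rfl
  -- iteratedDeriv rewritings in hdom
  have hdom' : ∀ᵐ u ∂F, ∀ ξ : ℝ, |ξ| < ε →
      |f (l₀ + τ * ξ * u)| ≤ D u ∧ |u * deriv f (l₀ + τ * ξ * u)| ≤ D u ∧
      |u ^ 2 * deriv (deriv f) (l₀ + τ * ξ * u)| ≤ D u := by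
    filter_upwards [hdom] with u hu ξ hξ
    have h0 := hu ξ hξ 0 (by norm_num)
    have h1 := hu ξ hξ 1 (by norm_num)
    have h2 := hu ξ hξ 2 (by norm_num)
    rw [iteratedDeriv_zero, pow_zero, one_mul] at h0
    rw [iteratedDeriv_one, pow_one] at h1
    rw [show (2 : ℕ) = 1 + 1 from rfl, iteratedDeriv_succ, iteratedDeriv_one] at h2
    exact ⟨h0, h1, h2⟩
  -- inner chain rule
  have hchain : ∀ (u ξ : ℝ),
      HasDerivAt (fun ξ : ℝ => f (l₀ + τ * ξ * u)) (τ * u * deriv f (l₀ + τ * ξ * u)) ξ := by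
    intro u ξ
    have hin : HasDerivAt (fun ξ : ℝ => l₀ + τ * ξ * u) (τ * u) ξ := by
      simpa using (((hasDerivAt_id ξ).const_mul τ).mul_const u).const_add l₀
    have : HasDerivAt (fun ξ : ℝ => f (l₀ + τ * ξ * u)) (deriv f (l₀ + τ * ξ * u) * (τ * u)) ξ :=
      ((hdf (l₀ + τ * ξ * u)).hasDerivAt).comp ξ hin
    simpa [mul_comm] using this
  have hchain' : ∀ (u ξ : ℝ),
      HasDerivAt (fun ξ : ℝ => τ * u * deriv f (l₀ + τ * ξ * u))
        (τ ^ 2 * u ^ 2 * deriv (deriv f) (l₀ + τ * ξ * u)) ξ := by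
    intro u ξ
    have hin : HasDerivAt (fun ξ : ℝ => l₀ + τ * ξ * u) (τ * u) ξ := by
      simpa using (((hasDerivAt_id ξ).const_mul τ).mul_const u).const_add l₀
    have : HasDerivAt (fun ξ : ℝ => τ * u * deriv f (l₀ + τ * ξ * u))
        (τ * u * (deriv (deriv f) (l₀ + τ * ξ * u) * (τ * u))) ξ :=
      (((hdf' (l₀ + τ * ξ * u)).hasDerivAt).comp ξ hin).const_mul (τ * u)
    convert this using 1
    ring
  set g : ℝ → ℝ := fun ξ => ∫ u, f (l₀ + τ * ξ * u) ∂F with hg_def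
  set g1 : ℝ → ℝ := fun ξ => ∫ u, τ * u * deriv f (l₀ + τ * ξ * u) ∂F with hg1_def
  -- measurability facts
  have hmeas0 : ∀ ξ : ℝ, AEStronglyMeasurable (fun u => f (l₀ + τ * ξ * u)) F := by
    intro ξ
    exact (hcf.comp (by continuity : Continuous fun u : ℝ => l₀ + τ * ξ * u)).aestronglyMeasurable
  have hmeas1 : ∀ ξ : ℝ, AEStronglyMeasurable (fun u => τ * u * deriv f (l₀ + τ * ξ * u)) F := by
    intro ξ
    exact ((continuous_const.mul continuous_id).mul
      (hcf'.comp (by continuity : Continuous fun u : ℝ => l₀ + τ * ξ * u))).aestronglyMeasurable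
  -- Step A: derivative of g everywhere in ball 0 (ε/2)
  have stepA : ∀ ξ₀ : ℝ, |ξ₀| < ε / 2 → HasDerivAt g (g1 ξ₀) ξ₀ := by
    intro ξ₀ hξ₀
    have hball : ∀ ξ ∈ Metric.ball ξ₀ (ε / 2), |ξ| < ε := by
      intro ξ hξ
      rw [Metric.mem_ball, Real.dist_eq] at hξ
      calc |ξ| = |ξ - ξ₀ + ξ₀| := by ring_nf
        _ ≤ |ξ - ξ₀| + |ξ₀| := abs_add_le _ _
        _ < ε / 2 + ε / 2 := add_lt_add hξ hξ₀
        _ = ε := by ring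
    have hint : Integrable (fun u => f (l₀ + τ * ξ₀ * u)) F := by
      refine Integrable.mono' hD (hmeas0 ξ₀) ?_
      filter_upwards [hdom'] with u hu
      exact (hu ξ₀ (by linarith [abs_nonneg ξ₀])).1
    have := hasDerivAt_integral_of_dominated_loc_of_deriv_le (Metric.ball_mem_nhds ξ₀ (half_pos hε))
      (Filter.Eventually.of_forall fun ξ => hmeas0 ξ) hint (hmeas1 ξ₀)
      (F' := fun ξ u => τ * u * deriv f (l₀ + τ * ξ * u))
      (bound := fun u => τ * D u)
      ?_ (hD.const_mul τ) ?_
    · exact this.2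
    · filter_upwards [hdom'] with u hu ξ hξ
      have h1 := (hu ξ (hball ξ hξ)).2.1
      have : |τ * u * deriv f (l₀ + τ * ξ * u)| = τ * |u * deriv f (l₀ + τ * ξ * u)| := by
        rw [mul_assoc, abs_mul, abs_of_pos hτ]
      rw [Real.norm_eq_abs, this]
      exact mul_le_mul_of_nonneg_left h1 hτ.le
    · filter_upwards with u ξ hξ
      exact hchain u ξ
  -- Step B: derivative of g1 at 0
  have stepB : HasDerivAt g1 (τ ^ 2 * deriv (deriv f) l₀) 0 := by
    have hint : Integrable (fun u => τ * u * deriv f (l₀ + τ * 0 * u)) F := by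
      refine Integrable.mono' (hD.const_mul τ) (hmeas1 0) ?_
      filter_upwards [hdom'] with u hu
      have h1 := (hu 0 (by simpa using hε)).2.1
      have : |τ * u * deriv f (l₀ + τ * 0 * u)| = τ * |u * deriv f (l₀ + τ * 0 * u)| := by
        rw [mul_assoc, abs_mul, abs_of_pos hτ]
      rw [Real.norm_eq_abs, this]
      exact mul_le_mul_of_nonneg_left h1 hτ.le
    have hmeas2 : AEStronglyMeasurable
        (fun u : ℝ => τ ^ 2 * u ^ 2 * deriv (deriv f) (l₀ + τ * 0 * u)) F := by
      exact ((continuous_const.mul (continuous_id.pow 2)).mul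
        (hcf''.comp (by continuity : Continuous fun u : ℝ => l₀ + τ * 0 * u))).aestronglyMeasurable
    have key := hasDerivAt_integral_of_dominated_loc_of_deriv_le (Metric.ball_mem_nhds 0 hε)
      (Filter.Eventually.of_forall fun ξ => hmeas1 ξ) hint hmeas2
      (F' := fun ξ u => τ ^ 2 * u ^ 2 * deriv (deriv f) (l₀ + τ * ξ * u))
      (bound := fun u => τ ^ 2 * D u)
      ?_ (hD.const_mul (τ ^ 2)) ?_
    · have hval : (∫ u, τ ^ 2 * u ^ 2 * deriv (deriv f) (l₀ + τ * 0 * u) ∂F)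
          = τ ^ 2 * deriv (deriv f) l₀ := by
        have : ∀ u : ℝ, τ ^ 2 * u ^ 2 * deriv (deriv f) (l₀ + τ * 0 * u)
            = (τ ^ 2 * deriv (deriv f) l₀) * u ^ 2 := by
          intro u; simp [mul_comm, mul_assoc, mul_left_comm]
        rw [show (fun u : ℝ => τ ^ 2 * u ^ 2 * deriv (deriv f) (l₀ + τ * 0 * u))
            = fun u => (τ ^ 2 * deriv (deriv f) l₀) * u ^ 2 from funext this,
          MeasureTheory.integral_const_mul, hU2, mul_one]
      rw [← hval]
      exact key.2
    · filter_upwards [hdom'] with u hu ξ hξ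
      rw [Metric.mem_ball, Real.dist_eq, sub_zero] at hξ
      have h2 := (hu ξ hξ).2.2
      have : |τ ^ 2 * u ^ 2 * deriv (deriv f) (l₀ + τ * ξ * u)|
          = τ ^ 2 * |u ^ 2 * deriv (deriv f) (l₀ + τ * ξ * u)| := by
        rw [mul_assoc, abs_mul, abs_of_pos (by positivity : (0:ℝ) < τ ^ 2)]
      rw [Real.norm_eq_abs, this]
      exact mul_le_mul_of_nonneg_left h2 (by positivity)
    · filter_upwards with u ξ hξ
      exact hchain' u ξ
  -- values at 0
  have hg0 : g 0 = p x l₀ := by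
    simp [hg_def, hf_def]
  have hg10 : g1 0 = 0 := by
    have : ∀ u : ℝ, τ * u * deriv f (l₀ + τ * 0 * u) = (τ * deriv f l₀) * u := by
      intro u; simp [mul_comm, mul_assoc, mul_left_comm]
    show (∫ u, τ * u * deriv f (l₀ + τ * 0 * u) ∂F) = 0
    rw [show (fun u : ℝ => τ * u * deriv f (l₀ + τ * 0 * u))
        = fun u => (τ * deriv f l₀) * u from funext this,
      MeasureTheory.integral_const_mul, hU1, mul_zero]
  have hg0ne : g 0 ≠ 0 := by rw [hg0]; exact hpos.ne'
  -- derivative of log g at 0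
  have hA0 : HasDerivAt g (g1 0) 0 := stepA 0 (by simpa using half_pos hε)
  have hlog0 : HasDerivAt (fun ξ : ℝ => Real.log (g ξ)) 0 0 := by
    have := hA0.log hg0ne
    rwa [hg10, zero_div] at this
  -- positivity of g near 0
  have hgpos : ∀ᶠ ξ in 𝓝 (0 : ℝ), 0 < g ξ := by
    have hcont : ContinuousAt g 0 := hA0.continuousAt
    have : g 0 > 0 := by rw [hg0]; exact hpos
    exact hcont.eventually (eventually_gt_nhds this)
  -- eventually, deriv (log ∘ g) = g1 / g
  have hev : (deriv fun ξ : ℝ => Real.log (g ξ)) =ᶠ[𝓝 (0:ℝ)] fun ξ => g1 ξ / g ξ := by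
    have hball : ∀ᶠ ξ in 𝓝 (0:ℝ), |ξ| < ε / 2 := by
      have : Metric.ball (0:ℝ) (ε/2) ∈ 𝓝 (0:ℝ) := Metric.ball_mem_nhds _ (half_pos hε)
      filter_upwards [this] with ξ hξ
      rwa [Metric.mem_ball, Real.dist_eq, sub_zero] at hξ
    filter_upwards [hgpos, hball] with ξ hgξ hξ
    exact ((stepA ξ hξ).log hgξ.ne').deriv
  constructor
  · exact hlog0
  · rw [Filter.EventuallyEq.deriv_eq hev]
    have hdiv : HasDerivAt (fun ξ => g1 ξ / g ξ)
        ((τ ^ 2 * deriv (deriv f) l₀ * g 0 - g1 0 * g1 0) / (g 0) ^ 2) 0 :=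
      stepB.div hA0 hg0ne
    rw [hdiv.deriv, hg10, hg0]
    have h2 : iteratedDeriv 2 f l₀ = deriv (deriv f) l₀ := by
      rw [show (2 : ℕ) = 1 + 1 from rfl, iteratedDeriv_succ, iteratedDeriv_one]
    rw [hf_def] at h2 ⊢
    rw [h2]
    field_simp
    ring
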